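/- Let q_1, q_2, … be positive integers such that q_l divides q_{l+1} and q_l < q_{l+1} for all l ≥ 1, and suppose that for every C > 0 there exists an index n with (log q_{n+1})/(log q_n) > C. Then the series Σ_{l≥1} 1/q_l converges and its sum ζ = Σ_{l≥1} 1/q_l is a Liouville number. -/

import Mathlib

open scoped ENNReal

/-- The system `|x| ≤ X`, `max_{1≤i≤k} |ζ_i·x − y_i| ≤ X^(−η)` has at least `j`
linearly independent integer solutions `(x, y_1, …, y_k) ∈ ℤ^(k+1)`.
Here the solution vector `v i : Fin (k+1) → ℤ` has `x = v i 0` and `y_m = v i m.succ`. -/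
def HasSolutions (k : ℕ) (ζ : Fin k → ℝ) (η X : ℝ) (j : ℕ) : Prop :=
  ∃ v : Fin j → (Fin (k + 1) → ℤ), LinearIndependent ℤ v ∧
    ∀ i : Fin j, |(v i 0 : ℝ)| ≤ X ∧
      ∀ m : Fin k, |ζ m * (v i 0 : ℝ) - (v i m.succ : ℝ)| ≤ X ^ (-η)

/-- `λ_{k,j}(ζ⃗)`: the supremum in `[0,∞]` of all `η ∈ ℝ` such that the system has at
least `j` linearly independent solutions for arbitrarily large real `X`. -/
noncomputable def lambdaVec (k j : ℕ) (ζ : Fin k → ℝ) : ℝ≥0∞ :=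
  sSup {e : ℝ≥0∞ | ∃ η : ℝ, e = ENNReal.ofReal η ∧
    ∀ X₀ : ℝ, ∃ X : ℝ, X₀ ≤ X ∧ HasSolutions k ζ η X j}

/-- `λ̂_{k,j}(ζ⃗)`: the supremum in `[0,∞]` of all `η ∈ ℝ` such that the system has at
least `j` linearly independent solutions for every sufficiently large real `X`. -/
noncomputable def lambdaHatVec (k j : ℕ) (ζ : Fin k → ℝ) : ℝ≥0∞ :=
  sSup {e : ℝ≥0∞ | ∃ η : ℝ, e = ENNReal.ofReal η ∧
    ∃ X₀ : ℝ, ∀ X : ℝ, X₀ ≤ X → HasSolutions k ζ η X j}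

/-- `λ_{k,j}(ζ) = λ_{k,j}(ζ, ζ², …, ζ^k)`. -/
noncomputable def lambdaPow (k j : ℕ) (ζ : ℝ) : ℝ≥0∞ :=
  lambdaVec k j fun i => ζ ^ ((i : ℕ) + 1)

/-- `λ̂_{k,j}(ζ) = λ̂_{k,j}(ζ, ζ², …, ζ^k)`. -/
noncomputable def lambdaHatPow (k j : ℕ) (ζ : ℝ) : ℝ≥0∞ :=
  lambdaHatVec k j fun i => ζ ^ ((i : ℕ) + 1)

set_option maxHeartbeats 1000000 in
/-- The series `Σ_{l≥1} 1/q_l` converges and its sum is a Liouville number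
(the sequence `q` is indexed from `0` here, `q 0 = q_1`). -/
theorem stmt13 (q : ℕ → ℕ) (hpos : ∀ l, 0 < q l)
    (hdvd : ∀ l, q l ∣ q (l + 1)) (hlt : ∀ l, q l < q (l + 1))
    (hC : ∀ C : ℝ, 0 < C → ∃ n : ℕ, C < Real.log (q (n + 1)) / Real.log (q n)) :
    Summable (fun l : ℕ => (1 : ℝ) / q l) ∧ Liouville (∑' l : ℕ, (1 : ℝ) / q l) := by
  -- basic growth facts
  have hq2 : ∀ l, 2 * q l ≤ q (l + 1) := by
    intro l
    obtain ⟨c, hc⟩ := hdvd l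
    have h := hlt l
    rw [hc] at h ⊢
    have hc2 : 2 ≤ c := by nlinarith [hpos l]
    nlinarith [hpos l]
  have hdvd' : ∀ l m, l ≤ m → q l ∣ q m := by
    intro l m hlm
    induction m with
    | zero => simpa [Nat.le_zero.mp hlm]
    | succ m ih =>
      rcases Nat.lt_or_ge l (m+1) with h | h
      · exact (ih (Nat.lt_succ_iff.mp h)).trans (hdvd m)
      · have : l = m + 1 := le_antisymm hlm h
        simp [this]
  have hgrow : ∀ N j, q N * 2 ^ j ≤ q (N + j) := by
    intro N j
    induction j with
    | zero => simp
    | succ j ih =>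
      calc q N * 2 ^ (j+1) = (q N * 2 ^ j) * 2 := by ring
        _ ≤ q (N + j) * 2 := by nlinarith
        _ ≤ q (N + j + 1) := by linarith [hq2 (N + j)]
  -- summability
  have hqpos : ∀ l, (0:ℝ) < (q l : ℝ) := fun l => by exact_mod_cast hpos l
  have hle : ∀ l : ℕ, (1 : ℝ) / q l ≤ (1/2 : ℝ) ^ l := by
    intro l
    have h1 : (2:ℝ) ^ l ≤ (q l : ℝ) := by
      have h2 := hgrow 0 l
      have h0 : 1 ≤ q 0 := hpos 0
      have h3 : 2 ^ l ≤ q l := by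
        calc 2 ^ l ≤ q 0 * 2 ^ l := by nlinarith [(Nat.pow_pos (by norm_num : 0 < 2) : 0 < 2 ^ l)]
          _ ≤ q (0 + l) := h2
          _ = q l := by simp
      exact_mod_cast h3
    rw [div_pow, one_pow]
    exact one_div_le_one_div_of_le (by positivity) h1
  have hgeo : Summable (fun l : ℕ => (1/2 : ℝ) ^ l) :=
    summable_geometric_of_lt_one (by norm_num) (by norm_num)
  have hsum : Summable (fun l : ℕ => (1 : ℝ) / q l) :=
    Summable.of_nonneg_of_le (fun l => by positivity) hle hgeo
  refine ⟨hsum, ?_⟩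
  intro n
  -- find N with huge ratio
  obtain ⟨N, hN⟩ := hC (n + 1) (by positivity)
  have hlogN : 0 < Real.log (q N) := by
    by_contra h
    push_neg at h
    have h0 : 0 ≤ Real.log (q N) := Real.log_natCast_nonneg _
    have : Real.log (q N) = 0 := le_antisymm h h0
    rw [this, div_zero] at hN
    have : (0:ℝ) < n + 1 := by positivity
    linarith
  have hqN1 : (1:ℝ) < (q N : ℝ) := by
    by_contra h
    push_neg at h
    have : Real.log (q N) ≤ 0 := Real.log_nonpos (by positivity) h
    linarith
  -- q (N+1) > q N ^ (n+1)
  have hbig : ((q N : ℝ)) ^ (n + 1) < (q (N+1) : ℝ) := by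
    have h1 : ((n:ℝ) + 1) * Real.log (q N) < Real.log (q (N+1)) := by
      have := (lt_div_iff₀ hlogN).mp hN
      linarith
    have h2 : Real.log ((q N : ℝ) ^ (n+1)) < Real.log (q (N+1)) := by
      rw [Real.log_pow]
      push_cast
      linarith
    have := Real.exp_lt_exp.mpr h2
    rwa [Real.exp_log (by positivity), Real.exp_log (hqpos _)] at this
  -- the approximation
  set a : ℤ := ∑ l ∈ Finset.range (N+1), ((q N / q l : ℕ) : ℤ) with ha
  -- key: (a : ℝ) / q N = partial sum
  have hpart : ((a : ℝ)) / (q N : ℝ) = ∑ l ∈ Finset.range (N+1), (1 : ℝ) / q l := by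
    rw [ha, Int.cast_sum, Finset.sum_div]
    refine Finset.sum_congr rfl fun l hl => ?_
    have hld : q l ∣ q N := hdvd' l N (Nat.lt_succ_iff.mp (Finset.mem_range.mp hl))
    rw [Int.cast_natCast, Nat.cast_div hld (Nat.cast_pos.mpr (hpos l)).ne']
    rw [div_div, mul_comm, ← div_div, div_self (hqpos N).ne']
  -- tail
  set T : ℝ := ∑' j : ℕ, (1 : ℝ) / q (j + (N+1)) with hT
  have htails : Summable (fun j : ℕ => (1 : ℝ) / q (j + (N+1))) :=
    (summable_nat_add_iff (N+1)).mpr hsum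
  have hsplit : (∑' l : ℕ, (1 : ℝ) / q l) = (∑ l ∈ Finset.range (N+1), (1 : ℝ) / q l) + T := by
    rw [hT, ← Summable.sum_add_tsum_nat_add (N+1) hsum]
  have hdiff : (∑' l : ℕ, (1 : ℝ) / q l) - (a : ℝ) / (((q N : ℤ)) : ℝ) = T := by
    push_cast
    rw [hpart, hsplit]; ring
  have hTpos : 0 < T := by
    have h0 : (1:ℝ) / q (0 + (N+1)) ≤ T := Summable.le_tsum htails 0 (fun j _ => by positivity)
    have : (0:ℝ) < 1 / q (0 + (N+1)) := one_div_pos.mpr (hqpos _)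
    linarith
  have hTle : T ≤ 2 / q (N+1) := by
    have hle2 : ∀ j : ℕ, (1 : ℝ) / q (j + (N+1)) ≤ (1 / q (N+1)) * (1/2)^j := by
      intro j
      have h5 := hgrow (N+1) j
      have h5' : q (N+1) * 2 ^ j ≤ q (j + (N+1)) := by rwa [Nat.add_comm j (N+1)]
      have hg : (q (N+1) : ℝ) * 2 ^ j ≤ (q (j + (N+1)) : ℝ) := by exact_mod_cast h5'
      calc (1:ℝ) / q (j + (N+1)) ≤ 1 / ((q (N+1):ℝ) * 2 ^ j) :=
            one_div_le_one_div_of_le (mul_pos (hqpos _) (by positivity)) hg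
        _ = 1 / (q (N+1):ℝ) * (1/2) ^ j := by
            rw [div_pow, one_pow, div_mul_div_comm, one_mul]
    have hgeo2 : Summable (fun j : ℕ => ((1:ℝ) / q (N+1)) * (1/2)^j) := hgeo.mul_left _
    have := Summable.tsum_le_tsum hle2 htails hgeo2
    rw [tsum_mul_left, tsum_geometric_of_lt_one (by norm_num) (by norm_num)] at this
    rw [hT]
    calc T ≤ (1 / (q (N+1):ℝ)) * ((1 - 1/2:ℝ))⁻¹ := this
      _ = 2 / q (N+1) := by norm_num; ring
  have hq2le : (2:ℝ) ≤ (q N : ℝ) := by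
    have : 2 ≤ q N := by
      by_contra h
      push_neg at h
      interval_cases (q N) <;> simp_all
    exact_mod_cast this
  have hfin : 2 / (q (N+1) : ℝ) < 1 / ((q N : ℝ)) ^ n := by
    rw [div_lt_div_iff₀ (hqpos _) (by positivity)]
    have : (q N : ℝ) ^ (n+1) = (q N : ℝ) ^ n * (q N : ℝ) := by ring
    nlinarith [pow_pos (hqpos N) n, hbig]
  refine ⟨a, (q N : ℤ), by exact_mod_cast hqN1, ?_, ?_⟩
  · intro heq
    rw [heq] at hdiff
    simp at hdiff
    linarith
  · rw [hdiff]
    rw [abs_of_pos hTpos]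
    push_cast
    linarith
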